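/- For an irrational ρ ∈ 𝕋^d, the weighted Birkhoff average of the character σ_j(θ) = e^{2πi j·θ} (with j ∈ ℤ^d, j ≠ 0) along the trajectory θ_n = θ₀ + nρ tends to 0 as N → ∞; for j = 0 it equals 1 for every N. -/

import Mathlib

open Finset Filter Complex

/-- The bump weight function `w^{[p]}`. -/
noncomputable def bumpW (p : ℝ) (t : ℝ) : ℝ :=
  if t ∈ Set.Ioo (0:ℝ) 1 then Real.exp (-(t * (1 - t)) ^ (-p)) else 0

/-- Normalized weights. -/
noncomputable def wbWeight (p : ℝ) (n N : ℕ) : ℝ :=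
  bumpW p ((n : ℝ) / N) / ∑ m ∈ range N, bumpW p ((m : ℝ) / N)


lemma bumpW_nonneg (p t : ℝ) : 0 ≤ bumpW p t := by
  unfold bumpW; split
  · exact (Real.exp_pos _).le
  · exact le_rfl

lemma bumpW_le_one (p t : ℝ) : bumpW p t ≤ 1 := by
  unfold bumpW; split
  · rename_i h
    rw [Real.exp_le_one_iff]
    simp only [neg_nonpos, Left.nonneg_neg_iff]
    have hb : (0:ℝ) < t * (1 - t) := mul_pos h.1 (by linarith [h.2])
    exact (Real.rpow_pos_of_pos hb _).le
  · norm_num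

lemma bumpW_symm (p t : ℝ) : bumpW p (1 - t) = bumpW p t := by
  unfold bumpW
  have : (1 - t) ∈ Set.Ioo (0:ℝ) 1 ↔ t ∈ Set.Ioo (0:ℝ) 1 := by
    constructor <;> (intro h; obtain ⟨h1, h2⟩ := h; constructor <;> linarith)
  rw [if_congr this rfl rfl]
  ring_nf

lemma bumpW_mono (p : ℝ) (hp : 0 < p) {t₁ t₂ : ℝ} (h12 : t₁ ≤ t₂) (h2 : t₂ ≤ 1/2) :
    bumpW p t₁ ≤ bumpW p t₂ := by
  rcases le_or_gt t₁ 0 with h | h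
  · have : bumpW p t₁ = 0 := by
      unfold bumpW; rw [if_neg]; simp [Set.mem_Ioo]; intro h'; linarith
    rw [this]; exact bumpW_nonneg p t₂
  · have h1m : t₁ ∈ Set.Ioo (0:ℝ) 1 := ⟨h, by linarith⟩
    have h2m : t₂ ∈ Set.Ioo (0:ℝ) 1 := ⟨by linarith, by linarith⟩
    unfold bumpW
    rw [if_pos h1m, if_pos h2m]
    apply Real.exp_le_exp.2
    apply neg_le_neg
    apply Real.rpow_le_rpow_of_nonpos
    · exact mul_pos h1m.1 (by linarith [h1m.2])
    · nlinarith
    · linarith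

lemma bumpW_anti (p : ℝ) (hp : 0 < p) {t₁ t₂ : ℝ} (h1 : 1/2 ≤ t₁) (h12 : t₁ ≤ t₂) :
    bumpW p t₂ ≤ bumpW p t₁ := by
  rw [← bumpW_symm p t₁, ← bumpW_symm p t₂]
  exact bumpW_mono p hp (by linarith) (by linarith)

lemma bumpW_lower (p : ℝ) (hp : 0 < p) {t : ℝ} (h1 : 1/3 ≤ t) (h2 : t ≤ 2/3) :
    Real.exp (-((2:ℝ)/9) ^ (-p)) ≤ bumpW p t := by
  have hm : t ∈ Set.Ioo (0:ℝ) 1 := ⟨by linarith, by linarith⟩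
  unfold bumpW
  rw [if_pos hm]
  apply Real.exp_le_exp.2
  apply neg_le_neg
  apply Real.rpow_le_rpow_of_nonpos (by norm_num)
  · nlinarith
  · linarith

lemma tv_bound (f : ℕ → ℝ) (M k₁ k₂ : ℕ) (hk : k₁ ≤ k₂) (hk2 : k₂ ≤ M)
    (h0 : ∀ n, 0 ≤ f n) (h1 : ∀ n, f n ≤ 1)
    (hmono : ∀ n, n + 1 ≤ k₁ → f n ≤ f (n+1))
    (hanti : ∀ n, k₂ ≤ n → f (n+1) ≤ f n)
    (hmid : k₂ ≤ k₁ + 1) :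
    ∑ n ∈ range M, |f (n+1) - f n| ≤ 4 := by
  rw [← Finset.sum_range_add_sum_Ico _ (le_trans hk hk2),
    ← Finset.sum_Ico_consecutive _ hk hk2]
  have p1 : ∑ n ∈ range k₁, |f (n+1) - f n| ≤ 1 := by
    have : ∀ n ∈ range k₁, |f (n+1) - f n| = f (n+1) - f n := by
      intro n hn
      rw [_root_.abs_of_nonneg (sub_nonneg.2 (hmono n (mem_range.1 hn)))]
    rw [Finset.sum_congr rfl this, Finset.sum_range_sub]
    linarith [h0 0, h1 k₁]
  have p2 : ∑ n ∈ Ico k₁ k₂, |f (n+1) - f n| ≤ 2 := by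
    calc ∑ n ∈ Ico k₁ k₂, |f (n+1) - f n| ≤ ∑ n ∈ Ico k₁ k₂, 2 := by
          apply Finset.sum_le_sum
          intro n _
          have := abs_sub_abs_le_abs_sub (f (n+1)) (f n)
          rw [abs_sub_comm]
          calc |f n - f (n+1)| ≤ |f n| + |f (n+1)| := abs_sub _ _
            _ ≤ 2 := by
                rw [_root_.abs_of_nonneg (h0 n), _root_.abs_of_nonneg (h0 (n+1))]
                linarith [h1 n, h1 (n+1)]
      _ ≤ 2 := by
          rw [Finset.sum_const, Nat.card_Ico]
          have hd : k₂ - k₁ ≤ 1 := by omega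
          rcases Nat.le_one_iff_eq_zero_or_eq_one.1 hd with h | h <;> rw [h] <;> simp
  have p3 : ∑ n ∈ Ico k₂ M, |f (n+1) - f n| ≤ 1 := by
    have : ∀ n ∈ Ico k₂ M, |f (n+1) - f n| = f n - f (n+1) := by
      intro n hn
      rw [abs_sub_comm, _root_.abs_of_nonneg (sub_nonneg.2 (hanti n (mem_Ico.1 hn).1))]
    rw [Finset.sum_congr rfl this, Finset.sum_Ico_eq_sum_range]
    have h2 := Finset.sum_range_sub' (fun i => f (k₂ + i)) (M - k₂)
    simp only [Nat.add_assoc]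
    rw [h2]
    simp only [Nat.add_zero]
    have : f (k₂ + (M - k₂)) ≥ 0 := h0 _
    linarith [h1 k₂]
  linarith

noncomputable def wSum (p : ℝ) (N : ℕ) : ℝ := ∑ m ∈ range N, bumpW p ((m : ℝ) / N)

lemma wSum_lower (p : ℝ) (hp : 0 < p) (N : ℕ) (hN : 1 ≤ N) :
    Real.exp (-((2:ℝ)/9) ^ (-p)) * (((2*N)/3 + 1 - (N+2)/3 : ℕ) : ℝ) ≤ wSum p N := by
  set c := Real.exp (-((2:ℝ)/9) ^ (-p)) with hc
  have hsub : Finset.Icc ((N+2)/3) ((2*N)/3) ⊆ range N := by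
    intro m hm
    rw [mem_Icc] at hm
    rw [mem_range]
    omega
  have : ∀ m ∈ Finset.Icc ((N+2)/3) ((2*N)/3), c ≤ bumpW p ((m : ℝ) / N) := by
    intro m hm
    rw [mem_Icc] at hm
    have h1 : N ≤ 3 * m := by omega
    have h2 : 3 * m ≤ 2 * N := by omega
    have hN' : (0:ℝ) < N := by exact_mod_cast hN
    have hr1 : (N:ℝ) ≤ 3 * m := by exact_mod_cast h1
    have hr2 : (3:ℝ) * m ≤ 2 * N := by exact_mod_cast h2
    apply bumpW_lower p hp
    · rw [le_div_iff₀ hN']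
      linarith
    · rw [div_le_iff₀ hN']
      linarith
  calc c * (((2*N)/3 + 1 - (N+2)/3 : ℕ) : ℝ)
      = ∑ _m ∈ Finset.Icc ((N+2)/3) ((2*N)/3), c := by
        rw [Finset.sum_const, Nat.card_Icc, nsmul_eq_mul, mul_comm]
    _ ≤ ∑ m ∈ Finset.Icc ((N+2)/3) ((2*N)/3), bumpW p ((m : ℝ) / N) :=
        Finset.sum_le_sum this
    _ ≤ wSum p N := Finset.sum_le_sum_of_subset_of_nonneg hsub
        (fun i _ _ => bumpW_nonneg p _)

lemma wSum_tendsto (p : ℝ) (hp : 0 < p) : Tendsto (wSum p) atTop atTop := by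
  apply tendsto_atTop_mono' atTop
    (show ∀ᶠ N in atTop, Real.exp (-((2:ℝ)/9) ^ (-p)) *
      (((2*N)/3 + 1 - (N+2)/3 : ℕ) : ℝ) ≤ wSum p N from
      eventually_atTop.2 ⟨1, fun N hN => wSum_lower p hp N hN⟩)
  apply Tendsto.const_mul_atTop (Real.exp_pos _)
  apply tendsto_natCast_atTop_atTop.comp
  apply tendsto_atTop_atTop.2
  intro b
  exact ⟨3*b+9, fun N hN => by omega⟩

lemma wSum_pos (p : ℝ) (N : ℕ) (hN : 2 ≤ N) : 0 < wSum p N := by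
  have h1 : (1:ℕ) ∈ range N := mem_range.2 (by omega)
  apply Finset.sum_pos' (fun i _ => bumpW_nonneg p _) ⟨1, h1, ?_⟩
  have hN' : (0:ℝ) < N := by exact_mod_cast (by omega : 0 < N)
  have hm : ((1:ℕ):ℝ)/N ∈ Set.Ioo (0:ℝ) 1 := by
    constructor
    · positivity
    · rw [div_lt_one hN']
      exact_mod_cast (by omega : 1 < N)
  unfold bumpW
  rw [if_pos hm]
  exact Real.exp_pos _

lemma geom_norm (z : ℂ) (hz : z ≠ 1) (hz1 : ‖z‖ = 1) (k : ℕ) :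
    ‖∑ i ∈ range k, z ^ i‖ ≤ 2 / ‖1 - z‖ := by
  have hne : z - 1 ≠ 0 := sub_ne_zero.2 hz
  have h1z : (0:ℝ) < ‖z - 1‖ := norm_pos_iff.2 hne
  rw [geom_sum_eq hz k, norm_div, norm_sub_rev (1:ℂ) z]
  gcongr
  calc ‖z^k - 1‖ ≤ ‖z^k‖ + ‖(1:ℂ)‖ := norm_sub_le _ _
    _ = 2 := by rw [norm_pow, hz1]; norm_num

lemma abel_bound (a : ℕ → ℝ) (z : ℂ) (hz : z ≠ 1) (hz1 : ‖z‖ = 1) (N : ℕ) :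
    ‖∑ n ∈ range N, (a n : ℂ) * z ^ n‖ ≤
      (|a (N-1)| + ∑ i ∈ range (N-1), |a (i+1) - a i|) * (2 / ‖1 - z‖) := by
  have hG := Finset.sum_range_by_parts (fun n => (a n : ℂ)) (fun n => z ^ n) N
  simp only [smul_eq_mul] at hG
  rw [hG]
  have h2 : (0:ℝ) ≤ 2 / ‖1 - z‖ := by positivity
  calc ‖(a (N-1) : ℂ) * ∑ i ∈ range N, z ^ i -
        ∑ i ∈ range (N-1), ((a (i+1) : ℂ) - a i) * ∑ j ∈ range (i+1), z ^ j‖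
      ≤ ‖(a (N-1) : ℂ) * ∑ i ∈ range N, z ^ i‖ +
        ‖∑ i ∈ range (N-1), ((a (i+1) : ℂ) - a i) * ∑ j ∈ range (i+1), z ^ j‖ :=
        norm_sub_le _ _
    _ ≤ |a (N-1)| * (2 / ‖1 - z‖) +
        ∑ i ∈ range (N-1), |a (i+1) - a i| * (2 / ‖1 - z‖) := by
        apply add_le_add
        · rw [norm_mul, Complex.norm_real, Real.norm_eq_abs]
          exact mul_le_mul_of_nonneg_left (geom_norm z hz hz1 N) (abs_nonneg _)
        · refine (norm_sum_le _ _).trans (Finset.sum_le_sum fun i _ => ?_)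
          rw [norm_mul]
          have : ‖((a (i+1) : ℂ) - a i)‖ = |a (i+1) - a i| := by
            rw [show ((a (i+1) : ℂ) - a i) = ((a (i+1) - a i : ℝ) : ℂ) by push_cast; ring,
              Complex.norm_real, Real.norm_eq_abs]
          rw [this]
          exact mul_le_mul_of_nonneg_left (geom_norm z hz hz1 (i+1)) (abs_nonneg _)
    _ = (|a (N-1)| + ∑ i ∈ range (N-1), |a (i+1) - a i|) * (2 / ‖1 - z‖) := by
        rw [← Finset.sum_mul, add_mul]

lemma bump_tv (p : ℝ) (hp : 0 < p) (N : ℕ) (hN : 2 ≤ N) :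
    ∑ i ∈ range (N-1), |bumpW p (((i+1:ℕ):ℝ)/N) - bumpW p ((i:ℝ)/N)| ≤ 4 := by
  have hN' : (0:ℝ) < N := by exact_mod_cast (by omega : 0 < N)
  apply tv_bound (fun n => bumpW p ((n:ℝ)/N)) (N-1) (N/2) ((N+1)/2)
    (by omega) (by omega) (fun n => bumpW_nonneg p _) (fun n => bumpW_le_one p _)
  · intro n hn
    apply bumpW_mono p hp
    · gcongr
      exact_mod_cast Nat.le_succ n
    · rw [div_le_iff₀ hN']
      have : 2 * (n+1) ≤ N := by omega
      have : ((n:ℝ)+1) * 2 ≤ N := by exact_mod_cast by omega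
      push_cast
      linarith
  · intro n hn
    apply bumpW_anti p hp
    · rw [le_div_iff₀ hN']
      have : N ≤ 2 * n := by omega
      have : (N:ℝ) ≤ 2 * n := by exact_mod_cast this
      linarith
    · gcongr
      exact_mod_cast Nat.le_succ n
  · omega

theorem weighted_birkhoff_characters {d : ℕ} (p : ℝ) (hp : 1 ≤ p) (ρ θ₀ : Fin d → ℝ)
    (hirr : ∀ a : Fin d → ℤ, (∃ m : ℤ, (∑ i, (a i : ℝ) * ρ i) = (m : ℝ)) → a = 0)
    (j : Fin d → ℤ) :
    (j ≠ 0 →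
      Tendsto (fun N : ℕ => ∑ n ∈ range N, (wbWeight p n N : ℂ) *
          Complex.exp (2 * Real.pi * Complex.I * ∑ i, (j i : ℂ) * ((θ₀ i : ℂ) + n * (ρ i : ℂ))))
        atTop (nhds 0)) ∧
    (j = 0 → ∀ N : ℕ, 2 ≤ N →
      (∑ n ∈ range N, (wbWeight p n N : ℂ) *
          Complex.exp (2 * Real.pi * Complex.I * ∑ i, (j i : ℂ) * ((θ₀ i : ℂ) + n * (ρ i : ℂ))))
        = 1) := by
  have hp0 : 0 < p := lt_of_lt_of_le one_pos hp
  constructor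
  · intro hj
    set α : ℝ := ∑ i, (j i : ℝ) * ρ i with hα
    set A : ℝ := ∑ i, (j i : ℝ) * θ₀ i with hA
    set z : ℂ := Complex.exp (2 * Real.pi * Complex.I * (α:ℂ)) with hzdef
    have hsum : ∀ n : ℕ, (∑ i, (j i : ℂ) * ((θ₀ i : ℂ) + n * (ρ i : ℂ)))
        = (A:ℂ) + n * (α:ℂ) := by
      intro n
      rw [hα, hA]
      push_cast
      rw [Finset.mul_sum]
      rw [← Finset.sum_add_distrib]
      apply Finset.sum_congr rfl
      intro i _
      ring
    have hexp : ∀ n : ℕ, Complex.exp (2 * Real.pi * Complex.I * ((A:ℂ) + n * (α:ℂ)))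
        = Complex.exp (2 * Real.pi * Complex.I * (A:ℂ)) * z ^ n := by
      intro n
      rw [mul_add, Complex.exp_add]
      congr 1
      rw [show 2 * (Real.pi:ℂ) * Complex.I * ((n:ℂ) * α)
          = n * (2 * Real.pi * Complex.I * α) by ring, Complex.exp_nat_mul]
    have hz : z ≠ 1 := by
      intro h
      rw [hzdef, Complex.exp_eq_one_iff] at h
      obtain ⟨m, hm⟩ := h
      have h2pi : (2 * Real.pi * Complex.I) ≠ 0 := by
        simp [Real.pi_ne_zero, Complex.I_ne_zero]
      have hαm : (α:ℂ) = (m:ℂ) := by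
        apply mul_left_cancel₀ h2pi
        rw [hm]; ring
      have : α = (m:ℝ) := by exact_mod_cast hαm
      exact hj (hirr j ⟨m, this⟩)
    have normexp : ∀ r : ℝ, ‖Complex.exp (2 * Real.pi * Complex.I * (r:ℂ))‖ = 1 := by
      intro r
      rw [show 2 * (Real.pi:ℂ) * Complex.I * (r:ℂ) = ((2 * Real.pi * r : ℝ) : ℂ) * Complex.I by
        push_cast; ring]
      rw [Complex.norm_exp_ofReal_mul_I]
    have hz1 : ‖z‖ = 1 := normexp α
    -- the norm bound
    have hbound : ∀ N : ℕ, 2 ≤ N →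
        ‖∑ n ∈ range N, (wbWeight p n N : ℂ) *
          Complex.exp (2 * Real.pi * Complex.I * ∑ i, (j i : ℂ) * ((θ₀ i : ℂ) + n * (ρ i : ℂ)))‖
        ≤ (10 / ‖1 - z‖) * (wSum p N)⁻¹ := by
      intro N hN
      have hS : 0 < wSum p N := wSum_pos p N hN
      have heq : ∑ n ∈ range N, (wbWeight p n N : ℂ) *
          Complex.exp (2 * Real.pi * Complex.I * ∑ i, (j i : ℂ) * ((θ₀ i : ℂ) + n * (ρ i : ℂ)))
          = Complex.exp (2 * Real.pi * Complex.I * (A:ℂ)) *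
            ∑ n ∈ range N, (wbWeight p n N : ℂ) * z ^ n := by
        rw [Finset.mul_sum]
        apply Finset.sum_congr rfl
        intro n _
        rw [hsum n, hexp n]
        ring
      rw [heq, norm_mul, normexp A, one_mul]
      have habel := abel_bound (fun n => wbWeight p n N) z hz hz1 N
      refine habel.trans ?_
      have hSrfl : (∑ m ∈ range N, bumpW p ((m:ℝ)/N)) = wSum p N := rfl
      have hterm : |wbWeight p (N-1) N| ≤ (wSum p N)⁻¹ := by
        have h0 : 0 ≤ wbWeight p (N-1) N := by
          unfold wbWeight
          rw [hSrfl]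
          exact div_nonneg (bumpW_nonneg p _) hS.le
        rw [_root_.abs_of_nonneg h0]
        unfold wbWeight
        rw [hSrfl, div_eq_mul_inv]
        calc bumpW p ((↑(N-1):ℝ)/N) * (wSum p N)⁻¹ ≤ 1 * (wSum p N)⁻¹ := by
              gcongr
              exact bumpW_le_one p _
          _ = (wSum p N)⁻¹ := one_mul _
      have htv : ∑ i ∈ range (N-1), |wbWeight p (i+1) N - wbWeight p i N|
          ≤ 4 * (wSum p N)⁻¹ := by
        have : ∀ i, |wbWeight p (i+1) N - wbWeight p i N|
            = |bumpW p ((↑(i+1):ℝ)/N) - bumpW p ((i:ℝ)/N)| * (wSum p N)⁻¹ := by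
          intro i
          unfold wbWeight
          rw [hSrfl, div_sub_div_same, abs_div, _root_.abs_of_pos hS, div_eq_mul_inv]
        simp only [this]
        rw [← Finset.sum_mul]
        exact mul_le_mul_of_nonneg_right (bump_tv p hp0 N hN) (by positivity)
      calc (|wbWeight p (N-1) N| + ∑ i ∈ range (N-1),
            |wbWeight p (i+1) N - wbWeight p i N|) * (2 / ‖1 - z‖)
          ≤ ((wSum p N)⁻¹ + 4 * (wSum p N)⁻¹) * (2 / ‖1 - z‖) := by
            gcongr
        _ = (10 / ‖1 - z‖) * (wSum p N)⁻¹ := by ring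
    have hgz : Tendsto (fun N : ℕ => (10 / ‖1 - z‖) * (wSum p N)⁻¹) atTop (nhds 0) := by
      rw [show (0:ℝ) = (10 / ‖1 - z‖) * 0 by ring]
      exact Tendsto.const_mul _ ((wSum_tendsto p hp0).inv_tendsto_atTop)
    apply squeeze_zero_norm' ?_ hgz
    exact eventually_atTop.2 ⟨2, hbound⟩
  · intro hj N hN
    subst hj
    have : ∀ n : ℕ, (∑ i, ((0 : Fin d → ℤ) i : ℂ) * ((θ₀ i : ℂ) + n * (ρ i : ℂ))) = 0 := by
      intro n; simp
    simp only [this, mul_zero, Complex.exp_zero, mul_one]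
    rw [← Complex.ofReal_sum]
    norm_cast
    unfold wbWeight
    rw [← Finset.sum_div]
    exact div_self (ne_of_gt (wSum_pos p N hN))
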